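/- arXiv:2112.05070 — 2 statements merged into one kernel-verified Lean document; each statement's English description precedes it below -/
import Mathlib

section
/- Let Γ = (T, τ) be a 2HAM system with strength function str, and let Γ' = (T, 1) be the temperature-1 system over the same tile set with the modified strength function str', where str'(g, g') = 1 if str(g, g') ≥ τ and str'(g, g') = 0 otherwise. If Γ' uniquely produces the assembly A, then A is producible in Γ, i.e., A ∈ P'_Γ. -/
namespace TwoHAM

/-- A tile: a non-rotating unit square with a glue on each of its four sides. -/
structure Tile (Glue : Type) where
  north : Glue
  south : Glue
  east : Glue
  west : Glue

variable {Glue : Type}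

/-- The strength of the abutting glues of tile `t₁` placed at position `p` and tile `t₂`
placed at position `q`; zero if `p` and `q` are not adjacent. -/
def bondStrength (str : Glue → Glue → ℕ) (t₁ t₂ : Tile Glue) (p q : ℤ × ℤ) : ℕ :=
  if q = (p.1 + 1, p.2) then str t₁.east t₂.west
  else if q = (p.1 - 1, p.2) then str t₁.west t₂.east
  else if q = (p.1, p.2 + 1) then str t₁.north t₂.south
  else if q = (p.1, p.2 - 1) then str t₁.south t₂.north
  else 0

/-- A configuration: a partial function from `ℤ²` to tiles with finite nonempty domain. -/
structure Config (Glue : Type) where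
  tiles : ℤ × ℤ → Option (Tile Glue)
  finite : {p : ℤ × ℤ | tiles p ≠ none}.Finite
  nonempty : {p : ℤ × ℤ | tiles p ≠ none}.Nonempty

namespace Config

/-- The domain of a configuration. -/
def dom (C : Config Glue) : Set (ℤ × ℤ) := {p : ℤ × ℤ | C.tiles p ≠ none}

end Config

/-- The glue strength contributed between position `p` of configuration `C₁` and
position `q` of configuration `C₂`. -/
def crossBond (str : Glue → Glue → ℕ) (C₁ C₂ : Config Glue) (p q : ℤ × ℤ) : ℕ :=
  match C₁.tiles p, C₂.tiles q with
  | some t₁, some t₂ => bondStrength str t₁ t₂ p q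
  | _, _ => 0

/-- `(p, q)` is a binding site between configurations `C₁` and `C₂` if the abutting glues
of the tiles of `C₁` at `p` and of `C₂` at `q` have positive strength. -/
def IsBindingSite (str : Glue → Glue → ℕ) (C₁ C₂ : Config Glue) (p q : ℤ × ℤ) : Prop :=
  0 < crossBond str C₁ C₂ p q

namespace Config

/-- The glue strength between positions `p` and `q` within a configuration. -/
def bond (str : Glue → Glue → ℕ) (C : Config Glue) (p q : ℤ × ℤ) : ℕ :=
  crossBond str C C p q

/-- The bond graph of a configuration: adjacent positions with positive abutting glue
strength are joined by an edge. -/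
def bondGraph (str : Glue → Glue → ℕ) (C : Config Glue) : SimpleGraph (ℤ × ℤ) where
  Adj p q := p ≠ q ∧ (0 < C.bond str p q ∨ 0 < C.bond str q p)
  symm := by
    constructor
    rintro p q ⟨h1, h2⟩
    exact ⟨h1.symm, h2.symm⟩
  loopless := by
    constructor
    rintro p ⟨h1, _⟩
    exact h1 rfl

/-- The bond graph of a configuration is connected (all positions of the domain are
mutually reachable). -/
def Connected (str : Glue → Glue → ℕ) (C : Config Glue) : Prop :=
  ∀ p ∈ C.dom, ∀ q ∈ C.dom, (C.bondGraph str).Reachable p q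

/-- The domain of a configuration as a finset. -/
noncomputable def domFinset (C : Config Glue) : Finset (ℤ × ℤ) := C.finite.toFinset

/-- The total weight of the edge cut of the bond graph determined by a set `S`. -/
noncomputable def cutWeight (str : Glue → Glue → ℕ) (C : Config Glue)
    (S : Finset (ℤ × ℤ)) : ℕ :=
  ∑ p ∈ S, ∑ q ∈ C.domFinset \ S, C.bond str p q

/-- A configuration is `τ`-stable if its bond graph is connected and every edge cut has
total weight at least `τ`. -/
def IsStable (str : Glue → Glue → ℕ) (τ : ℕ) (C : Config Glue) : Prop :=
  C.Connected str ∧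
    ∀ S : Finset (ℤ × ℤ), S ⊆ C.domFinset → S.Nonempty → (C.domFinset \ S).Nonempty →
      τ ≤ C.cutWeight str S

/-- The translation of a configuration by a vector `v`. -/
def translate (C : Config Glue) (v : ℤ × ℤ) : Config Glue where
  tiles p := C.tiles (p - v)
  finite := by
    have h : {p : ℤ × ℤ | C.tiles (p - v) ≠ none} =
        (fun q : ℤ × ℤ => q + v) '' {p : ℤ × ℤ | C.tiles p ≠ none} := by
      ext p
      constructor
      · intro hp
        exact ⟨p - v, hp, sub_add_cancel p v⟩
      · rintro ⟨q, hq, rfl⟩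
        simpa using hq
    rw [h]
    exact C.finite.image _
  nonempty := by
    obtain ⟨p, hp⟩ := C.nonempty
    exact ⟨p + v, by simpa using hp⟩

/-- `C₁` is a restriction of `C₂`. -/
def Subconfig (C₁ C₂ : Config Glue) : Prop :=
  ∀ p : ℤ × ℤ, C₁.tiles p ≠ none → C₁.tiles p = C₂.tiles p

/-- A configuration is tree-bonded if its bond graph is a tree (connected and acyclic). -/
def IsTreeBonded (str : Glue → Glue → ℕ) (C : Config Glue) : Prop :=
  C.Connected str ∧ (C.bondGraph str).IsAcyclic

end Config

/-- The assembly of a configuration: the set of all of its translations. -/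
def asmOf (C : Config Glue) : Set (Config Glue) := {C' | ∃ v : ℤ × ℤ, C' = C.translate v}

/-- A set of configurations is an assembly if it is the set of all translations of some
configuration. -/
def IsAssembly (A : Set (Config Glue)) : Prop := ∃ C : Config Glue, A = asmOf C

/-- An assembly is `τ`-stable if its configurations are. -/
def IsStableAssembly (str : Glue → Glue → ℕ) (τ : ℕ) (A : Set (Config Glue)) : Prop :=
  ∀ C ∈ A, C.IsStable str τ

/-- An assembly is tree-bonded if the bond graph of its configurations is a tree. -/
def IsTreeBondedAssembly (str : Glue → Glue → ℕ) (A : Set (Config Glue)) : Prop :=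
  ∀ C ∈ A, C.IsTreeBonded str

/-- `A ⊑ B`: some configuration of `A` is a restriction of some configuration of `B`. -/
def Subassembly (A B : Set (Config Glue)) : Prop :=
  ∃ C₁ ∈ A, ∃ C₂ ∈ B, Config.Subconfig C₁ C₂

/-- Union of two partial tile maps (preferring the first). -/
def optOr {α : Type} (a b : Option α) : Option α :=
  match a with
  | some x => some x
  | none => b

/-- Assemblies `A` and `B` are `τ`-combinable into `C`. -/
def Combinable (str : Glue → Glue → ℕ) (τ : ℕ) (A B C : Set (Config Glue)) : Prop :=
  ∃ CA ∈ A, ∃ CB ∈ B, ∃ CC ∈ C,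
    (∀ p : ℤ × ℤ, CC.tiles p = optOr (CA.tiles p) (CB.tiles p)) ∧
    CA.dom ∩ CB.dom = ∅ ∧
    CC.IsStable str τ

/-- The configuration consisting of a single tile `t` at the origin. -/
def singletonConfig (t : Tile Glue) : Config Glue where
  tiles p := if p = ((0 : ℤ), (0 : ℤ)) then some t else none
  finite := by
    apply Set.Finite.subset (Set.finite_singleton ((0 : ℤ), (0 : ℤ)))
    intro p hp
    by_cases h : p = ((0 : ℤ), (0 : ℤ)) <;> simp_all
  nonempty := ⟨((0 : ℤ), (0 : ℤ)), by simp⟩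

/-- The producible assemblies of the 2HAM system `Γ = (T, τ)`. -/
inductive Producible (str : Glue → Glue → ℕ) (T : Set (Tile Glue)) (τ : ℕ) :
    Set (Config Glue) → Prop
  | single (t : Tile Glue) (ht : t ∈ T) : Producible str T τ (asmOf (singletonConfig t))
  | combine {A B C : Set (Config Glue)} : Producible str T τ A → Producible str T τ B →
      Combinable str τ A B C → Producible str T τ C

/-- A producible assembly is terminal if it is not `τ`-combinable with any producible
assembly. -/
def Terminal (str : Glue → Glue → ℕ) (T : Set (Tile Glue)) (τ : ℕ)
    (A : Set (Config Glue)) : Prop :=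
  Producible str T τ A ∧
    ∀ B C : Set (Config Glue), Producible str T τ B → ¬ Combinable str τ A B C

/-- `Γ = (T, τ)` uniquely produces `A`. -/
def UniquelyProduces (str : Glue → Glue → ℕ) (T : Set (Tile Glue)) (τ : ℕ)
    (A : Set (Config Glue)) : Prop :=
  (∀ X : Set (Config Glue), Terminal str T τ X ↔ X = A) ∧
    ∀ B : Set (Config Glue), Producible str T τ B → Subassembly B A

/-- The modified strength function of the noncooperative (temperature 1) system:
strength `1` exactly for glue pairs of strength at least `τ`. -/
def capStr (str : Glue → Glue → ℕ) (τ : ℕ) : Glue → Glue → ℕ :=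
  fun g g' => if τ ≤ str g g' then 1 else 0

/-- A `τ`-combination that uses cooperative binding: every binding site between the two
combined configurations has strength strictly less than `τ`. -/
def CombinableCoop (str : Glue → Glue → ℕ) (τ : ℕ) (A B C : Set (Config Glue)) : Prop :=
  ∃ CA ∈ A, ∃ CB ∈ B, ∃ CC ∈ C,
    (∀ p : ℤ × ℤ, CC.tiles p = optOr (CA.tiles p) (CB.tiles p)) ∧
    CA.dom ∩ CB.dom = ∅ ∧
    CC.IsStable str τ ∧
    ∀ p q : ℤ × ℤ, crossBond str CA CB p q < τ

end TwoHAM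

namespace TwoHAM

lemma capStr_bondStrength_le {Glue : Type} (str : Glue → Glue → ℕ) (τ : ℕ)
    (t₁ t₂ : Tile Glue) (p q : ℤ × ℤ)
    (h : 0 < bondStrength (capStr str τ) t₁ t₂ p q) :
    τ ≤ bondStrength str t₁ t₂ p q := by
  unfold bondStrength capStr at *
  split_ifs at h ⊢ <;> omega

lemma capStr_bond_le {Glue : Type} (str : Glue → Glue → ℕ) (τ : ℕ)
    (C : Config Glue) (p q : ℤ × ℤ)
    (h : 0 < C.bond (capStr str τ) p q) :
    τ ≤ C.bond str p q := by
  unfold Config.bond crossBond at *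
  cases hp : C.tiles p <;> cases hq : C.tiles q <;> simp [hp, hq] at h ⊢
  exact capStr_bondStrength_le str τ _ _ p q h

lemma capStr_stable {Glue : Type} (str : Glue → Glue → ℕ) (τ : ℕ) (hτ : 0 < τ)
    (C : Config Glue) (h : C.IsStable (capStr str τ) 1) : C.IsStable str τ := by
  obtain ⟨hconn, hcut⟩ := h
  have hle : C.bondGraph (capStr str τ) ≤ C.bondGraph str := by
    intro p q hpq
    obtain ⟨hne, hb⟩ := hpq
    refine ⟨hne, ?_⟩
    rcases hb with hb | hb
    · exact Or.inl (lt_of_lt_of_le hτ (capStr_bond_le str τ C p q hb))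
    · exact Or.inr (lt_of_lt_of_le hτ (capStr_bond_le str τ C q p hb))
  constructor
  · intro p hp q hq
    exact (hconn p hp q hq).mono hle
  · intro S hS hS1 hS2
    have h1 := hcut S hS hS1 hS2
    -- there is a positive term
    have hpos : ∃ p ∈ S, ∃ q ∈ C.domFinset \ S, 0 < C.bond (capStr str τ) p q := by
      by_contra hc
      push_neg at hc
      have : C.cutWeight (capStr str τ) S = 0 := by
        apply Finset.sum_eq_zero
        intro p hp
        apply Finset.sum_eq_zero
        intro q hq
        have := hc p hp q hq
        omega
      omega
    obtain ⟨p, hp, q, hq, hpq⟩ := hpos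
    have hτle : τ ≤ C.bond str p q := capStr_bond_le str τ C p q hpq
    calc τ ≤ C.bond str p q := hτle
      _ ≤ ∑ q ∈ C.domFinset \ S, C.bond str p q :=
        Finset.single_le_sum (fun _ _ => Nat.zero_le _) hq
      _ ≤ C.cutWeight str S :=
        Finset.single_le_sum (f := fun p => ∑ q ∈ C.domFinset \ S, C.bond str p q)
          (fun _ _ => Nat.zero_le _) hp

lemma capStr_combinable {Glue : Type} (str : Glue → Glue → ℕ) (τ : ℕ) (hτ : 0 < τ)
    {A B C : Set (Config Glue)} (h : Combinable (capStr str τ) 1 A B C) :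
    Combinable str τ A B C := by
  obtain ⟨CA, hCA, CB, hCB, CC, hCC, hun, hdisj, hstab⟩ := h
  exact ⟨CA, hCA, CB, hCB, CC, hCC, hun, hdisj, capStr_stable str τ hτ CC hstab⟩

lemma capStr_producible {Glue : Type} (str : Glue → Glue → ℕ)
    (T : Set (Tile Glue)) (τ : ℕ) (hτ : 0 < τ)
    {A : Set (Config Glue)} (h : Producible (capStr str τ) T 1 A) :
    Producible str T τ A := by
  induction h with
  | single t ht => exact Producible.single t ht
  | combine _ _ hcomb ihA ihB =>
      exact Producible.combine ihA ihB (capStr_combinable str τ hτ hcomb)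

/-- If the temperature-1 system `Γ' = (T, 1)` with the modified strength
function `capStr str τ` uniquely produces the assembly `A`, then `A` is producible in
`Γ = (T, τ)`. -/
theorem producible_of_noncoop_unique {Glue : Type} [Fintype Glue]
    (str : Glue → Glue → ℕ) (hsym : ∀ g g' : Glue, str g g' = str g' g)
    (T : Set (Tile Glue)) (hT : T.Finite) (τ : ℕ) (hτ : 0 < τ)
    (A : Set (Config Glue))
    (huniq : UniquelyProduces (capStr str τ) T 1 A) :
    Producible str T τ A := by
  have hterm : Terminal (capStr str τ) T 1 A := (huniq.1 A).mpr rfl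
  exact capStr_producible str T τ hτ hterm.1

end TwoHAM
end

section
/- Let A be a tree-bonded assembly with fixed configuration A₀, let v ∈ ℤ², and let b₁ = (p₁, q₁) and b₂ = (p₂, q₂) be two distinct binding sites between A₀ and A₀ + v. Let P₁ be the unique path between p₁ and p₂ in the bond graph of A₀ and P₂ the unique path between q₁ and q₂ in the bond graph of A₀ + v, and suppose the position sets of P₁ and P₂ are disjoint. Then the configuration C̃ obtained as the union of the restriction of A₀ to the positions of P₁ and the restriction of A₀ + v to the positions of P₂ is 2-stable, and the assembly of C̃ is not a subassembly of A. -/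
namespace TwoHAM

section Aux

variable {Glue : Type} {str : Glue → Glue → ℕ}

lemma bondStrength_symm (hsym : ∀ g g' : Glue, str g g' = str g' g)
    (t₁ t₂ : Tile Glue) (p q : ℤ × ℤ) :
    bondStrength str t₁ t₂ p q = bondStrength str t₂ t₁ q p := by
  obtain ⟨a, b⟩ := p; obtain ⟨c, d⟩ := q
  unfold bondStrength
  simp only [Prod.mk.injEq]
  split_ifs <;> first | rfl | apply hsym | omega

lemma bondStrength_translate (t₁ t₂ : Tile Glue) (p q w : ℤ × ℤ) :
    bondStrength str t₁ t₂ (p + w) (q + w) = bondStrength str t₁ t₂ p q := by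
  obtain ⟨a, b⟩ := p; obtain ⟨c, d⟩ := q; obtain ⟨e, f⟩ := w
  unfold bondStrength
  simp only [Prod.mk_add_mk, Prod.mk.injEq]
  split_ifs <;> first | rfl | omega

lemma crossBond_congr {C₁ C₂ D₁ D₂ : Config Glue} {p q : ℤ × ℤ}
    (h₁ : C₁.tiles p = D₁.tiles p) (h₂ : C₂.tiles q = D₂.tiles q) :
    crossBond str C₁ C₂ p q = crossBond str D₁ D₂ p q := by
  unfold crossBond
  rw [h₁, h₂]

lemma crossBond_symm (hsym : ∀ g g' : Glue, str g g' = str g' g)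
    (C₁ C₂ : Config Glue) (p q : ℤ × ℤ) :
    crossBond str C₁ C₂ p q = crossBond str C₂ C₁ q p := by
  unfold crossBond
  rcases h₁ : C₁.tiles p with _ | t₁ <;> rcases h₂ : C₂.tiles q with _ | t₂ <;>
    simp [bondStrength_symm hsym]

lemma crossBond_pos_left {C₁ C₂ : Config Glue} {p q : ℤ × ℤ}
    (h : 0 < crossBond str C₁ C₂ p q) : C₁.tiles p ≠ none := by
  intro hn
  unfold crossBond at h
  rw [hn] at h
  rcases C₂.tiles q with _ | t <;> simp at h

lemma crossBond_pos_right {C₁ C₂ : Config Glue} {p q : ℤ × ℤ}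
    (h : 0 < crossBond str C₁ C₂ p q) : C₂.tiles q ≠ none := by
  intro hn
  unfold crossBond at h
  rw [hn] at h
  rcases C₁.tiles p with _ | t <;> simp at h

lemma bond_symm (hsym : ∀ g g' : Glue, str g g' = str g' g)
    (C : Config Glue) (p q : ℤ × ℤ) :
    C.bond str p q = C.bond str q p :=
  crossBond_symm hsym C C p q

lemma adj_bond_pos (hsym : ∀ g g' : Glue, str g g' = str g' g)
    {C : Config Glue} {p q : ℤ × ℤ} (h : (C.bondGraph str).Adj p q) :
    0 < C.bond str p q := by
  rcases h.2 with h' | h'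
  · exact h'
  · rwa [bond_symm hsym]

lemma adj_mem_dom (hsym : ∀ g g' : Glue, str g g' = str g' g)
    {C : Config Glue} {p q : ℤ × ℤ} (h : (C.bondGraph str).Adj p q) :
    p ∈ C.dom ∧ q ∈ C.dom := by
  have hb := adj_bond_pos hsym h
  exact ⟨crossBond_pos_left hb, crossBond_pos_right hb⟩

lemma walk_support_subset_dom (hsym : ∀ g g' : Glue, str g g' = str g' g)
    {C : Config Glue} {x y : ℤ × ℤ} (w : (C.bondGraph str).Walk x y)
    (hx : x ∈ C.dom) : ∀ z ∈ w.support, z ∈ C.dom := by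
  induction w with
  | nil => intro z hz; simp only [SimpleGraph.Walk.support_nil, List.mem_singleton] at hz; rwa [hz]
  | @cons a b c h p ih =>
    intro z hz
    rw [SimpleGraph.Walk.support_cons, List.mem_cons] at hz
    rcases hz with rfl | hz
    · exact hx
    · exact ih (adj_mem_dom hsym h).2 z hz

lemma adj_congr {C D : Config Glue} {p q : ℤ × ℤ}
    (hp : C.tiles p = D.tiles p) (hq : C.tiles q = D.tiles q) :
    (C.bondGraph str).Adj p q ↔ (D.bondGraph str).Adj p q := by
  show (p ≠ q ∧ _) ↔ (p ≠ q ∧ _)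
  unfold Config.bond
  rw [crossBond_congr hp hq, crossBond_congr hq hp]

lemma translate_adj (C : Config Glue) (w : ℤ × ℤ) (p q : ℤ × ℤ) :
    ((C.translate w).bondGraph str).Adj (p + w) (q + w) ↔ (C.bondGraph str).Adj p q := by
  have hb : ∀ a b : ℤ × ℤ, (C.translate w).bond str (a + w) (b + w) = C.bond str a b := by
    intro a b
    unfold Config.bond crossBond Config.translate
    simp only [add_sub_cancel_right]
    rcases h₁ : C.tiles a with _ | t₁ <;> rcases h₂ : C.tiles b with _ | t₂ <;>
      simp [bondStrength_translate]
  show ((p + w ≠ q + w) ∧ _) ↔ ((p ≠ q) ∧ _)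
  rw [hb p q, hb q p]
  constructor
  · rintro ⟨h1, h2⟩
    exact ⟨fun h => h1 (by rw [h]), h2⟩
  · rintro ⟨h1, h2⟩
    exact ⟨fun h => h1 (by simpa using congrArg (· - w) h), h2⟩

lemma subconfig_bondGraph_le {C D : Config Glue} (h : C.Subconfig D) :
    C.bondGraph str ≤ D.bondGraph str := by
  intro p q hadj
  have hb : 0 < C.bond str p q ∨ 0 < C.bond str q p := hadj.2
  refine ⟨hadj.1, ?_⟩
  rcases hb with hb | hb
  · left
    have hp := crossBond_pos_left hb
    have hq := crossBond_pos_right hb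
    have : D.bond str p q = C.bond str p q :=
      crossBond_congr (h p hp).symm (h q hq).symm
    rwa [this]
  · right
    have hp := crossBond_pos_left hb
    have hq := crossBond_pos_right hb
    have : D.bond str q p = C.bond str q p :=
      crossBond_congr (h q hp).symm (h p hq).symm
    rwa [this]

lemma exists_crossing {V : Type} [DecidableEq V] {G : SimpleGraph V} {S : Finset V} :
    ∀ {x y : V} (w : G.Walk x y), x ∈ S → y ∉ S →
      ∃ u z : V, u ∈ S ∧ z ∉ S ∧ G.Adj u z ∧ s(u, z) ∈ w.edges := by
  intro x y w
  induction w with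
  | nil => intro hx hy; exact absurd hx hy
  | @cons a b c h p ih =>
    intro hx hy
    by_cases hb : b ∈ S
    · obtain ⟨u, z, h1, h2, h3, h4⟩ := ih hb hy
      exact ⟨u, z, h1, h2, h3, by rw [SimpleGraph.Walk.edges_cons]; exact List.mem_cons_of_mem _ h4⟩
    · exact ⟨a, b, hx, hb, h, by rw [SimpleGraph.Walk.edges_cons]; exact List.mem_cons_self⟩

lemma exists_crossing' {V : Type} [DecidableEq V] {G : SimpleGraph V} {S : Finset V}
    {x y : V} (w : G.Walk x y) (hx : x ∉ S) (hy : y ∈ S) :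
    ∃ u z : V, u ∈ S ∧ z ∉ S ∧ G.Adj u z ∧ s(u, z) ∈ w.edges := by
  obtain ⟨u, z, h1, h2, h3, h4⟩ := exists_crossing w.reverse hy hx
  rw [SimpleGraph.Walk.edges_reverse, List.mem_reverse] at h4
  exact ⟨u, z, h1, h2, h3, h4⟩

end Aux

/-- Let `A` be a tree-bonded assembly with fixed configuration `A₀`, and
let `(p₁, q₁) ≠ (p₂, q₂)` be binding sites between `A₀` and `A₀ + v`. If the unique path
`W₁` from `p₁` to `p₂` in the bond graph of `A₀` and the unique path `W₂` from `q₁` to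
`q₂` in the bond graph of `A₀ + v` have disjoint position sets, then the configuration
obtained as the union of the restriction of `A₀` to the positions of `W₁` and the
restriction of `A₀ + v` to the positions of `W₂` is `2`-stable, and its assembly is not a
subassembly of `A`. -/
theorem loop_gives_rogue {Glue : Type} [Fintype Glue]
    (str : Glue → Glue → ℕ) (hsym : ∀ g g' : Glue, str g g' = str g' g)
    (A : Set (Config Glue)) (A₀ : Config Glue)
    (hA : A = asmOf A₀) (htree : IsTreeBondedAssembly str A)
    (v : ℤ × ℤ) (p₁ q₁ p₂ q₂ : ℤ × ℤ)
    (hb₁ : IsBindingSite str A₀ (A₀.translate v) p₁ q₁)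
    (hb₂ : IsBindingSite str A₀ (A₀.translate v) p₂ q₂)
    (hne : ((p₁, q₁) : (ℤ × ℤ) × (ℤ × ℤ)) ≠ (p₂, q₂))
    (W₁ : (A₀.bondGraph str).Walk p₁ p₂) (hW₁ : W₁.IsPath)
    (W₂ : ((A₀.translate v).bondGraph str).Walk q₁ q₂) (hW₂ : W₂.IsPath)
    (hdisj : ∀ x ∈ W₁.support, x ∉ W₂.support)
    (C' : Config Glue)
    (hC' : ∀ p : ℤ × ℤ, C'.tiles p =
      if p ∈ W₁.support then A₀.tiles p
      else if p ∈ W₂.support then (A₀.translate v).tiles p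
      else none) :
    C'.IsStable str 2 ∧ ¬ Subassembly (asmOf C') A := by
  classical
  -- basic domain facts
  have hp₁dom : p₁ ∈ A₀.dom := crossBond_pos_left hb₁
  have hq₁dom : q₁ ∈ (A₀.translate v).dom := crossBond_pos_right hb₁
  have hp₂dom : p₂ ∈ A₀.dom := crossBond_pos_left hb₂
  have hq₂dom : q₂ ∈ (A₀.translate v).dom := crossBond_pos_right hb₂
  have hsupdom₁ : ∀ z ∈ W₁.support, z ∈ A₀.dom := walk_support_subset_dom hsym W₁ hp₁dom
  have hsupdom₂ : ∀ z ∈ W₂.support, z ∈ (A₀.translate v).dom :=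
    walk_support_subset_dom hsym W₂ hq₁dom
  -- tiles of C' on the two supports
  have hC'W₁ : ∀ p ∈ W₁.support, C'.tiles p = A₀.tiles p := by
    intro p hp; rw [hC' p, if_pos hp]
  have hC'W₂ : ∀ p ∈ W₂.support, C'.tiles p = (A₀.translate v).tiles p := by
    intro p hp
    rw [hC' p, if_neg (fun h => hdisj p h hp), if_pos hp]
  -- domain of C'
  have hdom : ∀ p : ℤ × ℤ, p ∈ C'.dom ↔ (p ∈ W₁.support ∨ p ∈ W₂.support) := by
    intro p
    show C'.tiles p ≠ none ↔ _
    rw [hC' p]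
    by_cases h1 : p ∈ W₁.support
    · simp only [if_pos h1]
      exact ⟨fun _ => Or.inl h1, fun _ => hsupdom₁ p h1⟩
    · simp only [if_neg h1]
      by_cases h2 : p ∈ W₂.support
      · simp only [if_pos h2]
        exact ⟨fun _ => Or.inr h2, fun _ => hsupdom₂ p h2⟩
      · simp [h2, h1]
  -- transfer the two walks to the bond graph of C'
  have hedges₁ : ∀ e ∈ W₁.edges, e ∈ (C'.bondGraph str).edgeSet := by
    intro e he
    revert he
    refine Sym2.ind (fun x y he => ?_) e
    have hx : x ∈ W₁.support := W₁.fst_mem_support_of_mem_edges he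
    have hy : y ∈ W₁.support := W₁.snd_mem_support_of_mem_edges he
    have hadj : (A₀.bondGraph str).Adj x y := W₁.adj_of_mem_edges he
    exact (adj_congr (hC'W₁ x hx) (hC'W₁ y hy)).mpr hadj
  have hedges₂ : ∀ e ∈ W₂.edges, e ∈ (C'.bondGraph str).edgeSet := by
    intro e he
    revert he
    refine Sym2.ind (fun x y he => ?_) e
    have hx : x ∈ W₂.support := W₂.fst_mem_support_of_mem_edges he
    have hy : y ∈ W₂.support := W₂.snd_mem_support_of_mem_edges he
    have hadj : ((A₀.translate v).bondGraph str).Adj x y := W₂.adj_of_mem_edges he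
    exact (adj_congr (hC'W₂ x hx) (hC'W₂ y hy)).mpr hadj
  set W₁' : (C'.bondGraph str).Walk p₁ p₂ := W₁.transfer _ hedges₁ with hW₁'def
  set W₂' : (C'.bondGraph str).Walk q₁ q₂ := W₂.transfer _ hedges₂ with hW₂'def
  have hW₁'supp : W₁'.support = W₁.support := W₁.support_transfer hedges₁
  have hW₂'supp : W₂'.support = W₂.support := W₂.support_transfer hedges₂
  have hW₁'edges : W₁'.edges = W₁.edges := W₁.edges_transfer hedges₁
  have hW₂'edges : W₂'.edges = W₂.edges := W₂.edges_transfer hedges₂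
  -- the two cross adjacencies
  have hp₁W : p₁ ∈ W₁.support := W₁.start_mem_support
  have hp₂W : p₂ ∈ W₁.support := W₁.end_mem_support
  have hq₁W : q₁ ∈ W₂.support := W₂.start_mem_support
  have hq₂W : q₂ ∈ W₂.support := W₂.end_mem_support
  have hpq₁ : (C'.bondGraph str).Adj p₁ q₁ := by
    refine ⟨fun h => hdisj p₁ hp₁W (h ▸ hq₁W), Or.inl ?_⟩
    show 0 < C'.bond str p₁ q₁
    have : C'.bond str p₁ q₁ = crossBond str A₀ (A₀.translate v) p₁ q₁ :=
      crossBond_congr (hC'W₁ p₁ hp₁W) (hC'W₂ q₁ hq₁W)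
    rw [this]; exact hb₁
  have hqp₂ : (C'.bondGraph str).Adj q₂ p₂ := by
    refine ⟨fun h => hdisj p₂ hp₂W (h ▸ hq₂W), Or.inr ?_⟩
    show 0 < C'.bond str p₂ q₂
    have : C'.bond str p₂ q₂ = crossBond str A₀ (A₀.translate v) p₂ q₂ :=
      crossBond_congr (hC'W₁ p₂ hp₂W) (hC'W₂ q₂ hq₂W)
    rw [this]; exact hb₂
  -- the cycle
  set P : (C'.bondGraph str).Walk q₁ p₁ :=
    W₂'.append (SimpleGraph.Walk.cons hqp₂ W₁'.reverse) with hPdef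
  set c : (C'.bondGraph str).Walk p₁ p₁ := SimpleGraph.Walk.cons hpq₁ P with hcdef
  have hPsupp : P.support = W₂.support ++ W₁.support.reverse := by
    rw [hPdef, SimpleGraph.Walk.support_append, SimpleGraph.Walk.support_cons]
    rw [hW₂'supp]
    simp only [List.tail_cons, SimpleGraph.Walk.support_reverse, hW₁'supp]
  have hPedges : P.edges = W₂.edges ++ (s(q₂, p₂) :: W₁.edges.reverse) := by
    rw [hPdef, SimpleGraph.Walk.edges_append, SimpleGraph.Walk.edges_cons,
      SimpleGraph.Walk.edges_reverse, hW₂'edges, hW₁'edges]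
  have hPpath : P.IsPath := by
    rw [SimpleGraph.Walk.isPath_def, hPsupp]
    refine List.Nodup.append (hW₂.support_nodup) (List.nodup_reverse.mpr hW₁.support_nodup) ?_
    intro a ha ha'
    exact hdisj a (List.mem_reverse.mp ha') ha
  have hnotedge : s(p₁, q₁) ∉ P.edges := by
    rw [hPedges]
    intro hmem
    rcases List.mem_append.mp hmem with h | h
    · exact hdisj p₁ hp₁W (W₂.fst_mem_support_of_mem_edges h)
    · rcases List.mem_cons.mp h with h | h
      · rw [Sym2.eq_iff] at h
        rcases h with ⟨h1, h2⟩ | ⟨h1, h2⟩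
        · exact hdisj p₁ hp₁W (h1 ▸ hq₂W)
        · exact hne (by rw [Prod.mk.injEq]; exact ⟨h1, h2⟩)
      · rw [List.mem_reverse] at h
        exact hdisj q₁ (W₁.snd_mem_support_of_mem_edges h) hq₁W
  have hcyc : c.IsCycle := by
    rw [hcdef, SimpleGraph.Walk.cons_isCycle_iff]
    exact ⟨hPpath, hnotedge⟩
  -- the cycle's support covers the domain of C'
  have hsupc : ∀ z ∈ C'.dom, z ∈ c.support := by
    intro z hz
    rw [hcdef, SimpleGraph.Walk.support_cons, List.mem_cons]
    right
    rw [hPsupp, List.mem_append]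
    rcases (hdom z).mp hz with h | h
    · exact Or.inr (List.mem_reverse.mpr h)
    · exact Or.inl h
  have hsupcP : ∀ z ∈ C'.dom, z ∈ P.support := by
    intro z hz
    rw [hPsupp, List.mem_append]
    rcases (hdom z).mp hz with h | h
    · exact Or.inr (List.mem_reverse.mpr h)
    · exact Or.inl h
  -- connectivity
  have hconn : C'.Connected str := by
    intro x hx y hy
    have hx' : x ∈ c.support := hsupc x hx
    have hy' : y ∈ c.support := hsupc y hy
    have r₁ : (C'.bondGraph str).Reachable p₁ x := ⟨c.takeUntil x hx'⟩
    have r₂ : (C'.bondGraph str).Reachable p₁ y := ⟨c.takeUntil y hy'⟩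
    exact r₁.symm.trans r₂
  constructor
  · refine ⟨hconn, ?_⟩
    -- cut bound
    intro S hS hSne hScne
    obtain ⟨a, ha⟩ := hSne
    obtain ⟨b, hb⟩ := hScne
    have haD : a ∈ C'.dom := by
      have := hS ha
      rwa [Config.domFinset, Set.Finite.mem_toFinset] at this
    obtain ⟨hbD', hbS⟩ := Finset.mem_sdiff.mp hb
    have hbD : b ∈ C'.dom := by rwa [Config.domFinset, Set.Finite.mem_toFinset] at hbD'
    have hbSne : b ∉ S := hbS
    -- rotate the cycle to start at a
    have hac : a ∈ c.support := hsupc a haD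
    set d : (C'.bondGraph str).Walk a a := c.rotate a hac with hddef
    have hdcyc : d.IsCycle := hcyc.rotate hac
    have hbd : b ∈ d.support := by
      have hbt : b ∈ c.support.tail := by
        rw [hcdef, SimpleGraph.Walk.support_cons, List.tail_cons]
        exact hsupcP b hbD
      have := (c.support_rotate a hac).mem_iff.mpr hbt
      exact List.mem_of_mem_tail this
    set d₁ := d.takeUntil b hbd with hd₁def
    set d₂ := d.dropUntil b hbd with hd₂def
    have hspec : d₁.append d₂ = d := d.take_spec hbd
    have hnodup : (d₁.edges ++ d₂.edges).Nodup := by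
      have := hdcyc.isCircuit.isTrail.edges_nodup
      rwa [← hspec, SimpleGraph.Walk.edges_append] at this
    have hdisjE : ∀ e ∈ d₁.edges, e ∉ d₂.edges := by
      have := List.disjoint_of_nodup_append hnodup
      intro e he; exact this he
    obtain ⟨u₁, z₁, hu₁, hz₁, hadj₁, he₁⟩ := exists_crossing d₁ ha hbSne
    obtain ⟨u₂, z₂, hu₂, hz₂, hadj₂, he₂⟩ := exists_crossing' d₂ hbSne ha
    have hne12 : (u₁, z₁) ≠ (u₂, z₂) := by
      intro h
      rw [Prod.mk.injEq] at h
      exact hdisjE _ he₁ (by rw [h.1, h.2]; exact he₂)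
    -- both pairs lie in S ×ˢ (domFinset \ S)
    have hz₁D : z₁ ∈ C'.domFinset \ S := by
      refine Finset.mem_sdiff.mpr ⟨?_, hz₁⟩
      rw [Config.domFinset, Set.Finite.mem_toFinset]
      exact (adj_mem_dom hsym hadj₁).2
    have hz₂D : z₂ ∈ C'.domFinset \ S := by
      refine Finset.mem_sdiff.mpr ⟨?_, hz₂⟩
      rw [Config.domFinset, Set.Finite.mem_toFinset]
      exact (adj_mem_dom hsym hadj₂).2
    have hmem1 : (u₁, z₁) ∈ S ×ˢ (C'.domFinset \ S) := Finset.mem_product.mpr ⟨hu₁, hz₁D⟩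
    have hmem2 : (u₂, z₂) ∈ S ×ˢ (C'.domFinset \ S) := Finset.mem_product.mpr ⟨hu₂, hz₂D⟩
    have hb₁pos : 1 ≤ C'.bond str u₁ z₁ := adj_bond_pos hsym hadj₁
    have hb₂pos : 1 ≤ C'.bond str u₂ z₂ := adj_bond_pos hsym hadj₂
    unfold Config.cutWeight
    rw [← Finset.sum_product']
    calc (2 : ℕ) = 1 + 1 := rfl
      _ ≤ C'.bond str u₁ z₁ + C'.bond str u₂ z₂ := Nat.add_le_add hb₁pos hb₂pos
      _ = ∑ x ∈ {(u₁, z₁), (u₂, z₂)}, C'.bond str x.1 x.2 := (Finset.sum_pair (f := fun x : (ℤ × ℤ) × (ℤ × ℤ) => C'.bond str x.1 x.2) hne12).symm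
      _ ≤ ∑ x ∈ S ×ˢ (C'.domFinset \ S), C'.bond str x.1 x.2 := by
          refine Finset.sum_le_sum_of_subset ?_
          intro x hx
          rcases Finset.mem_insert.mp hx with rfl | hx
          · exact hmem1
          · rw [Finset.mem_singleton] at hx
            exact hx ▸ hmem2
  · -- not a subassembly
    rintro ⟨C₁, hC₁, C₂, hC₂, hsub⟩
    obtain ⟨w, rfl⟩ := hC₁
    have htree₂ := htree C₂ hC₂
    have hacyc : (C₂.bondGraph str).IsAcyclic := htree₂.2
    -- map the cycle into the translate of C'
    have hle : (C'.translate w).bondGraph str ≤ C₂.bondGraph str := subconfig_bondGraph_le hsub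
    set φ : C'.bondGraph str →g (C'.translate w).bondGraph str :=
      ⟨fun p => p + w, fun {p q} h => (translate_adj C' w p q).mpr h⟩ with hφdef
    have hinj : Function.Injective φ := fun x y h => add_left_injective w h
    have hcyc' : (c.map φ).IsCycle := hcyc.map hinj
    have hcyc'' : ((c.map φ).mapLe hle).IsCycle := hcyc'.mapLe hle
    exact hacyc _ hcyc''

end TwoHAM
end
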